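/- Let A be a normal domain and B ⊆ A a subring that is a direct summand of A as a B-module. Then B is integrally closed in its field of fractions (B is normal). -/

import Mathlib

/-- if `A` is a normal domain and `B ⊆ A` is a subring which is
a direct summand of `A` as a `B`-module (the inclusion splits `B`-linearly),
then `B` is normal, i.e. integrally closed in its fraction field. -/
theorem stmt13 {B A : Type*} [CommRing B] [CommRing A] [IsDomain A]
    [IsIntegrallyClosed A] [Algebra B A]
    (hinj : Function.Injective (algebraMap B A))
    (hsplit : ∃ g : A →ₗ[B] B, ∀ b : B, g (algebraMap B A b) = b) :
    IsIntegrallyClosed B := by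
  obtain ⟨g, hg⟩ := hsplit
  haveI : IsDomain B := hinj.isDomain (algebraMap B A)
  set K := FractionRing B
  set L := FractionRing A
  have hinjL : Function.Injective (algebraMap B L) := by
    rw [IsScalarTower.algebraMap_eq B A L]
    exact (IsFractionRing.injective A L).comp hinj
  set φ : K →+* L := IsFractionRing.lift hinjL with hφ
  have hφB : ∀ b : B, φ (algebraMap B K b) = algebraMap B L b := fun b =>
    IsFractionRing.lift_algebraMap hinjL b
  let φalg : K →ₐ[B] L := { φ with commutes' := hφB }
  rw [isIntegrallyClosed_iff K]
  intro x hx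
  obtain ⟨⟨p, q⟩, rfl⟩ := IsLocalization.mk'_surjective (nonZeroDivisors B) x
  have hint : IsIntegral A (φ (IsLocalization.mk' K p q)) :=
    (hx.map φalg).tower_top
  obtain ⟨a, ha⟩ := IsIntegrallyClosed.isIntegral_iff.mp hint
  have hrel : algebraMap B A p = algebraMap B A q * a := by
    apply IsFractionRing.injective A L
    have hspec := IsLocalization.mk'_spec K p q
    calc algebraMap A L (algebraMap B A p)
        = φ (algebraMap B K p) := by
          rw [hφB p, IsScalarTower.algebraMap_eq B A L]; rfl
      _ = φ (IsLocalization.mk' K p q * algebraMap B K q) := by rw [hspec]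
      _ = φ (IsLocalization.mk' K p q) * φ (algebraMap B K q) := by rw [map_mul]
      _ = algebraMap A L a * algebraMap A L (algebraMap B A q) := by
          rw [ha, hφB q, IsScalarTower.algebraMap_eq B A L]; rfl
      _ = algebraMap A L (algebraMap B A q * a) := by rw [← map_mul, mul_comm]
  have hp : p = q * g a := by
    have h2 := congrArg g hrel
    rw [hg p] at h2
    rw [h2]
    have h3 : algebraMap B A q * a = (q : B) • a := (Algebra.smul_def _ _).symm
    rw [h3, map_smul, smul_eq_mul]
  refine ⟨g a, ?_⟩
  rw [IsLocalization.eq_mk'_iff_mul_eq, ← map_mul]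
  congr 1
  rw [hp, mul_comm]
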